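/- In C[S_n], the product (v - J_1)(v - J_2)···(v - J_n) of linear factors in an indeterminate v involving the Jucys-Murphy elements J_a equals Σ_{σ ∈ S_n} sign(σ) σ v^{c(σ)}, where c(σ) is the number of orbits of σ on {1,...,n}. -/

import Mathlib

open Equiv Equiv.Perm Finset Polynomial

variable {α : Type*} [DecidableEq α] [Fintype α]

theorem attach_support (σ : Perm α) {b K : α} (hK : σ K = K) (hbK : b ≠ K) :
    (σ * Equiv.swap b K).support = σ.support ∪ {b, K} := by
  have hKb : σ b ≠ K := fun h => hbK (σ.injective (h.trans hK.symm))
  ext x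
  simp only [Perm.mem_support, Finset.mem_union, Finset.mem_insert, Finset.mem_singleton,
    Perm.mul_apply]
  rcases eq_or_ne x b with rfl | hxb
  · simp [swap_apply_left, hK, Ne.symm hbK]
  rcases eq_or_ne x K with rfl | hxK
  · simp [swap_apply_right, hKb]
  · simp [swap_apply_of_ne_of_ne hxb hxK, hxb, hxK]

theorem attach_isCycle {σ : Perm α} {b K : α} (hσ : σ.IsCycle) (hK : σ K = K) (hbK : b ≠ K)
    (hb : σ b ≠ b) : (σ * Equiv.swap b K).IsCycle := by
  set g := σ * Equiv.swap b K with hg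
  have hgb : g b = K := by simp [hg, swap_apply_left, hK]
  have hgK : g K = σ b := by simp [hg, swap_apply_right]
  have hgx : ∀ x, x ≠ b → x ≠ K → g x = σ x := fun x h1 h2 => by
    simp [hg, swap_apply_of_ne_of_ne h1 h2]
  have hstep : ∀ m : ℕ, g.SameCycle b ((σ ^ m) b) := by
    intro m; induction m with
    | zero => exact SameCycle.refl _ _
    | succ m ih =>
      have hsm : (σ ^ (m + 1)) b = σ ((σ ^ m) b) := by
        rw [pow_succ', Perm.mul_apply]
      rw [hsm]
      set y := (σ ^ m) b with hy
      have hymem : σ y ≠ y := by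
        have : b ∈ σ.support := Perm.mem_support.2 hb
        have : (σ ^ m) b ∈ σ.support := Perm.pow_apply_mem_support.2 this
        exact Perm.mem_support.1 this
      have hyK : y ≠ K := fun h => by rw [h, hK] at hymem; exact hymem rfl
      rcases eq_or_ne y b with hyb | hyb
      · refine SameCycle.trans ih ?_
        rw [hyb]
        exact ⟨2, by simp [pow_two, Perm.mul_apply, hgb, hgK]⟩
      · exact SameCycle.trans ih ⟨1, by simp [hgx y hyb hyK]⟩
  refine ⟨b, by rw [hgb]; exact Ne.symm hbK, fun y hy => ?_⟩
  rcases eq_or_ne y b with rfl | hyb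
  · exact SameCycle.refl _ _
  rcases eq_or_ne y K with rfl | hyK
  · exact ⟨1, by simpa using hgb⟩
  have hσy : σ y ≠ y := by rw [← hgx y hyb hyK]; exact hy
  obtain ⟨i, hi⟩ := hσ.exists_pow_eq hb hσy
  exact hi ▸ hstep i

/-- Splicing a new fixed point `K` into the cycle of `b`: cycle count unchanged. -/
theorem splice_cycleType_card {σ : Perm α} {b K : α} (hK : σ K = K) (hbK : b ≠ K)
    (hb : σ b ≠ b) :
    (σ * Equiv.swap b K).cycleType.card = σ.cycleType.card := by
  classical
  have hKs : K ∉ σ.support := by simp [Perm.mem_support, hK]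
  set γ := σ.cycleOf b with hγ
  have hγc : γ.IsCycle := isCycle_cycleOf σ hb
  have hγb : γ b = σ b := cycleOf_apply_self σ b
  have hγsupp : γ.support ⊆ σ.support := support_cycleOf_le σ b
  have hKγ : K ∉ γ.support := fun h => hKs (hγsupp h)
  have hγK : γ K = K := by simpa [Perm.mem_support] using hKγ
  have hbγ : b ∈ γ.support := Perm.mem_support.2 (by rw [hγb]; exact hb)
  have hmem : γ ∈ σ.cycleFactorsFinset := (cycleOf_mem_cycleFactorsFinset_iff).2
    (Perm.mem_support.2 hb)
  have hdisj : Perm.Disjoint (σ * γ⁻¹) γ := disjoint_mul_inv_of_mem_cycleFactorsFinset hmem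
  set δ := σ * γ⁻¹ with hδ
  have hσeq : σ = δ * γ := by rw [hδ, inv_mul_cancel_right]
  have hδK : δ K = K := by
    have hγinvK : γ⁻¹ K = K := by rw [Perm.inv_eq_iff_eq]; exact hγK.symm
    rw [hδ, Perm.mul_apply, hγinvK, hK]
  have hKδ : K ∉ δ.support := by simp [Perm.mem_support, hδK]
  -- γ' := γ * swap b K is a cycle
  have hγ'c : (γ * Equiv.swap b K).IsCycle := attach_isCycle hγc hγK hbK
    (by rw [hγb]; exact hb)
  have hγ'supp : (γ * Equiv.swap b K).support = γ.support ∪ {b, K} :=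
    attach_support γ hγK hbK
  have hdisj' : Perm.Disjoint δ (γ * Equiv.swap b K) := by
    rw [Perm.disjoint_iff_disjoint_support, hγ'supp]
    rw [Perm.disjoint_iff_disjoint_support] at hdisj
    refine Finset.disjoint_union_right.2 ⟨hdisj, ?_⟩
    rw [Finset.disjoint_insert_right, Finset.disjoint_singleton_right]
    exact ⟨Finset.disjoint_right.1 hdisj hbγ, hKδ⟩
  have hτeq : σ * Equiv.swap b K = δ * (γ * Equiv.swap b K) := by
    rw [hσeq, mul_assoc]
  rw [hτeq, hdisj'.cycleType_mul, hσeq, hdisj.cycleType_mul, Multiset.card_add, Multiset.card_add,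
    hγ'c.cycleType, hγc.cycleType]
  simp

/-- Attaching a 2-cycle on two fixed points: cycle count increases by one. -/
theorem disj_cycleType_card {σ : Perm α} {b K : α} (hK : σ K = K) (hbK : b ≠ K)
    (hb : σ b = b) :
    (σ * Equiv.swap b K).cycleType.card = σ.cycleType.card + 1 := by
  have hdisj : Perm.Disjoint σ (Equiv.swap b K) := by
    intro x
    rcases eq_or_ne x b with rfl | hxb
    · exact Or.inl hb
    rcases eq_or_ne x K with rfl | hxK
    · exact Or.inl hK
    · exact Or.inr (swap_apply_of_ne_of_ne hxb hxK)
  rw [hdisj.cycleType_mul, Multiset.card_add, (isCycle_swap hbK).cycleType]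
  simp

theorem key (n : ℕ) : ∀ k, k ≤ n →
    (((List.finRange n).take k).map (fun a =>
        (Polynomial.X : Polynomial (MonoidAlgebra ℂ (Equiv.Perm (Fin n)))) -
          Polynomial.C (∑ b ∈ Finset.univ.filter (fun b => b < a),
            MonoidAlgebra.of ℂ (Equiv.Perm (Fin n)) (Equiv.swap b a)))).prod
    = ∑ σ ∈ Finset.univ.filter (fun σ : Equiv.Perm (Fin n) => ∀ x ∈ σ.support, (x : ℕ) < k),
        ((Equiv.Perm.sign σ : ℤ) : ℂ) •
          (Polynomial.C (MonoidAlgebra.of ℂ (Equiv.Perm (Fin n)) σ) *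
            Polynomial.X ^ (σ.cycleType.card + (k - σ.support.card))) := by
  intro k
  induction k with
  | zero =>
    intro _
    have hfilt : Finset.univ.filter (fun σ : Equiv.Perm (Fin n) => ∀ x ∈ σ.support, (x : ℕ) < 0)
        = {1} := by
      ext σ
      simp only [Finset.mem_filter, Finset.mem_univ, true_and, Finset.mem_singleton]
      constructor
      · intro h
        rw [← Perm.support_eq_empty_iff]
        ext x
        simp only [Finset.notMem_empty, iff_false]
        exact fun hx => absurd (h x hx) (Nat.not_lt_zero _)
      · rintro rfl x hx
        simp at hx
    rw [hfilt, Finset.sum_singleton]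
    simp [← MonoidAlgebra.one_def]
  | succ k ih =>
    intro hk
    have hkn : k < n := hk
    set K : Fin n := ⟨k, hkn⟩ with hKdef
    have hxK : ∀ x : Fin n, x = K ↔ (x : ℕ) = k := by
      intro x; rw [Fin.ext_iff]
    have htake : (List.finRange n).take (k + 1) = (List.finRange n).take k ++ [K] := by
      rw [List.take_succ, List.getElem?_eq_getElem (by simpa using hkn)]
      simp [List.getElem_finRange]; rfl
    rw [htake, List.map_append, List.prod_append, List.map_singleton, List.prod_singleton,
      ih (le_of_lt hkn)]
    set A := Finset.univ.filter (fun σ : Equiv.Perm (Fin n) => ∀ x ∈ σ.support, (x : ℕ) < k)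
      with hAdef
    set B := Finset.univ.filter (fun b : Fin n => b < K) with hBdef
    set A' := Finset.univ.filter
      (fun σ : Equiv.Perm (Fin n) => ∀ x ∈ σ.support, (x : ℕ) < k + 1) with hA'def
    have hmemA : ∀ σ : Equiv.Perm (Fin n), σ ∈ A ↔ ∀ x ∈ σ.support, (x : ℕ) < k := by
      intro σ; rw [hAdef]; simp
    have hmemA' : ∀ σ : Equiv.Perm (Fin n), σ ∈ A' ↔ ∀ x ∈ σ.support, (x : ℕ) < k + 1 := by
      intro σ; rw [hA'def]; simp
    have hmemB : ∀ b : Fin n, b ∈ B ↔ (b : ℕ) < k := by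
      intro b; rw [hBdef]; simp [Fin.lt_def, -Fin.val_fin_lt]; rfl
    have hKval : (K : ℕ) = k := rfl
    have hσK : ∀ σ ∈ A, σ K = K := by
      intro σ hσ
      by_contra h
      have := (hmemA σ).1 hσ K (Perm.mem_support.2 h)
      omega
    have hAcard : ∀ σ ∈ A, σ.support.card ≤ k := by
      intro σ hσ
      have hsub : σ.support ⊆ Finset.Iio K := fun x hx =>
        Finset.mem_Iio.2 (by rw [Fin.lt_def]; exact (hmemA σ).1 hσ x hx)
      have := Finset.card_le_card hsub
      simpa using this
    -- exponent bookkeeping for the fixed part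
    have hE1 : ∀ σ ∈ A, σ.cycleType.card + (k + 1 - σ.support.card)
        = (σ.cycleType.card + (k - σ.support.card)) + 1 := by
      intro σ hσ
      have := hAcard σ hσ
      omega
    -- abbreviation for the Jucys–Murphy sum
    set S : MonoidAlgebra ℂ (Equiv.Perm (Fin n)) :=
      ∑ b ∈ B, MonoidAlgebra.of ℂ (Equiv.Perm (Fin n)) (Equiv.swap b K) with hSdef
    -- facts about attaching a swap
    have hKns : ∀ σ : Equiv.Perm (Fin n), σ K = K → K ∉ σ.support := fun σ h =>
      Perm.notMem_support.2 h
    have hpair : ∀ σ ∈ A, ∀ b ∈ B,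
        (σ * Equiv.swap b K).cycleType.card + (k + 1 - (σ * Equiv.swap b K).support.card)
          = σ.cycleType.card + (k - σ.support.card) := by
      intro σ hσ b hb
      have hbk : (b : ℕ) < k := (hmemB b).1 hb
      have hbK : b ≠ K := fun h => by rw [hxK] at h; omega
      have hKfix : σ K = K := hσK σ hσ
      have hKsupp : K ∉ σ.support := hKns σ hKfix
      have hsupp : (σ * Equiv.swap b K).support = σ.support ∪ {b, K} :=
        attach_support σ hKfix hbK
      rcases eq_or_ne (σ b) b with hfix | hmv
      · have hbsupp : b ∉ σ.support := Perm.notMem_support.2 hfix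
        have hcyc : (σ * Equiv.swap b K).cycleType.card = σ.cycleType.card + 1 :=
          disj_cycleType_card hKfix hbK hfix
        have hcard : (σ * Equiv.swap b K).support.card = σ.support.card + 2 := by
          rw [hsupp, Finset.card_union_of_disjoint, Finset.card_insert_of_notMem
            (by simpa using hbK), Finset.card_singleton]
          rw [Finset.disjoint_insert_right, Finset.disjoint_singleton_right]
          exact ⟨hbsupp, hKsupp⟩
        have hle : σ.support.card + 1 ≤ k := by
          have hsub : insert b σ.support ⊆ Finset.Iio K := by
            intro x hx
            rcases Finset.mem_insert.1 hx with rfl | hx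
            · exact Finset.mem_Iio.2 (by rw [Fin.lt_def]; omega)
            · refine Finset.mem_Iio.2 ?_
              rw [Fin.lt_def]
              have := (hmemA σ).1 hσ x hx
              omega
          have h2 := Finset.card_le_card hsub
          rw [Finset.card_insert_of_notMem hbsupp] at h2
          simpa using h2
        rw [hcyc, hcard]
        omega
      · have hbsupp : b ∈ σ.support := Perm.mem_support.2 hmv
        have hcyc : (σ * Equiv.swap b K).cycleType.card = σ.cycleType.card :=
          splice_cycleType_card hKfix hbK hmv
        have hU : σ.support ∪ {b, K} = insert K σ.support := by
          ext x
          simp only [Finset.mem_union, Finset.mem_insert, Finset.mem_singleton]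
          constructor
          · rintro (h | rfl | rfl)
            · exact Or.inr h
            · exact Or.inr hbsupp
            · exact Or.inl rfl
          · rintro (rfl | h)
            · exact Or.inr (Or.inr rfl)
            · exact Or.inl h
        have hcard : (σ * Equiv.swap b K).support.card = σ.support.card + 1 := by
          rw [hsupp, hU, Finset.card_insert_of_notMem hKsupp]
        rw [hcyc, hcard]
        have := hAcard σ hσ
        omega
    have hmemτ : ∀ σ ∈ A, ∀ b ∈ B, σ * Equiv.swap b K ∈
        A'.filter (fun τ => ¬ τ K = K) := by
      intro σ hσ b hb
      have hbk : (b : ℕ) < k := (hmemB b).1 hb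
      have hbK : b ≠ K := fun h => by rw [hxK] at h; omega
      have hKfix : σ K = K := hσK σ hσ
      have hsupp : (σ * Equiv.swap b K).support = σ.support ∪ {b, K} :=
        attach_support σ hKfix hbK
      rw [Finset.mem_filter]
      refine ⟨(hmemA' _).2 ?_, ?_⟩
      · intro x hx
        rw [hsupp] at hx
        rcases Finset.mem_union.1 hx with hx | hx
        · have := (hmemA σ).1 hσ x hx; omega
        · rcases Finset.mem_insert.1 hx with rfl | hx
          · omega
          · rw [Finset.mem_singleton] at hx; subst hx; omega
      · intro h
        have : K ∈ (σ * Equiv.swap b K).support := by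
          rw [hsupp]
          exact Finset.mem_union_right _ (Finset.mem_insert.2 (Or.inr (Finset.mem_singleton_self _)))
        rw [Perm.mem_support] at this
        exact this h
    -- per-term expansion of the product
    have hterm : ∀ σ ∈ A,
        (((Equiv.Perm.sign σ : ℤ) : ℂ) •
            (Polynomial.C (MonoidAlgebra.of ℂ (Equiv.Perm (Fin n)) σ) *
              Polynomial.X ^ (σ.cycleType.card + (k - σ.support.card)))) *
          (Polynomial.X - Polynomial.C S)
        = ((Equiv.Perm.sign σ : ℤ) : ℂ) •
            (Polynomial.C (MonoidAlgebra.of ℂ (Equiv.Perm (Fin n)) σ) *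
              Polynomial.X ^ (σ.cycleType.card + (k - σ.support.card) + 1))
          - ∑ b ∈ B, ((Equiv.Perm.sign σ : ℤ) : ℂ) •
              (Polynomial.C (MonoidAlgebra.of ℂ (Equiv.Perm (Fin n)) (σ * Equiv.swap b K)) *
                Polynomial.X ^ (σ.cycleType.card + (k - σ.support.card))) := by
      intro σ hσ
      rw [mul_sub]
      congr 1
      · rw [smul_mul_assoc, mul_assoc, ← pow_succ]
      · rw [smul_mul_assoc, mul_assoc, X_pow_mul, ← mul_assoc, ← Polynomial.C_mul, hSdef,
          Finset.mul_sum]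
        simp_rw [← map_mul]
        rw [map_sum Polynomial.C, Finset.sum_mul, Finset.smul_sum]
    rw [Finset.sum_mul, Finset.sum_congr rfl hterm, Finset.sum_sub_distrib]
    -- split target over whether K is fixed
    rw [← Finset.sum_filter_add_sum_filter_not A' (fun τ => τ K = K)]
    have hA1 : A'.filter (fun τ => τ K = K) = A := by
      ext τ
      rw [Finset.mem_filter, hmemA' τ, hmemA τ]
      constructor
      · rintro ⟨h1, h2⟩ x hx
        have hx1 := h1 x hx
        have hxKne : x ≠ K := fun h => by
          subst h; exact (Perm.mem_support.1 hx) h2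
        have hxk : (x : ℕ) ≠ k := fun h => hxKne (by rw [hxK x]; exact h)
        omega
      · intro h
        refine ⟨fun x hx => by have := h x hx; omega, ?_⟩
        by_contra h2
        have := h K (Perm.mem_support.2 h2)
        omega
    rw [hA1]
    have hfixeq : (∑ σ ∈ A, ((Equiv.Perm.sign σ : ℤ) : ℂ) •
          (Polynomial.C (MonoidAlgebra.of ℂ (Equiv.Perm (Fin n)) σ) *
            Polynomial.X ^ (σ.cycleType.card + (k + 1 - σ.support.card))))
        = ∑ σ ∈ A, ((Equiv.Perm.sign σ : ℤ) : ℂ) •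
          (Polynomial.C (MonoidAlgebra.of ℂ (Equiv.Perm (Fin n)) σ) *
            Polynomial.X ^ (σ.cycleType.card + (k - σ.support.card) + 1)) :=
      Finset.sum_congr rfl fun σ hσ => by rw [hE1 σ hσ]
    rw [hfixeq]
    have hmov : (∑ τ ∈ A'.filter (fun τ => ¬ τ K = K),
          ((Equiv.Perm.sign τ : ℤ) : ℂ) •
            (Polynomial.C (MonoidAlgebra.of ℂ (Equiv.Perm (Fin n)) τ) *
              Polynomial.X ^ (τ.cycleType.card + (k + 1 - τ.support.card))))
        = - ∑ σ ∈ A, ∑ b ∈ B, ((Equiv.Perm.sign σ : ℤ) : ℂ) •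
            (Polynomial.C (MonoidAlgebra.of ℂ (Equiv.Perm (Fin n)) (σ * Equiv.swap b K)) *
              Polynomial.X ^ (σ.cycleType.card + (k - σ.support.card))) := by
      rw [← Finset.sum_product']
      rw [← Finset.sum_neg_distrib]
      refine (Finset.sum_bij' (fun p _ => p.1 * Equiv.swap p.2 K)
        (fun τ _ => (τ * Equiv.swap (τ⁻¹ K) K, τ⁻¹ K)) ?_ ?_ ?_ ?_ ?_).symm
      · rintro ⟨σ, b⟩ hp
        rw [Finset.mem_product] at hp
        exact hmemτ σ hp.1 b hp.2
      · intro τ hτ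
        rw [Finset.mem_filter] at hτ
        obtain ⟨hτA', hτK⟩ := hτ
        set b' := τ⁻¹ K with hb'
        have hτb' : τ b' = K := by rw [hb']; exact τ.apply_symm_apply K
        have hb'K : b' ≠ K := by
          intro h
          have h2 := congrArg τ h
          rw [hτb'] at h2
          exact hτK h2.symm
        have hb'supp : b' ∈ τ.support := Perm.mem_support.2 (by rw [hτb']; exact Ne.symm hb'K)
        have hb'k : (b' : ℕ) < k := by
          have h1 := (hmemA' τ).1 hτA' b' hb'supp
          have h2 : (b' : ℕ) ≠ k := fun h => hb'K (by rw [hxK]; exact h)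
          omega
        rw [Finset.mem_product]
        refine ⟨?_, (hmemB b').2 hb'k⟩
        rw [hmemA]
        intro x hx
        have hσ'K : (τ * Equiv.swap b' K) K = K := by
          rw [Perm.mul_apply, swap_apply_right, hτb']
        have hxne : x ≠ K := fun h => by
          subst h; exact (Perm.mem_support.1 hx) hσ'K
        have hxsub : x ∈ τ.support ∪ (Equiv.swap b' K).support :=
          Perm.support_mul_le _ _ hx
        have hxk1 : (x : ℕ) < k + 1 := by
          rcases Finset.mem_union.1 hxsub with h | h
          · exact (hmemA' τ).1 hτA' x h
          · rw [support_swap hb'K] at h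
            rcases Finset.mem_insert.1 h with rfl | h
            · omega
            · rw [Finset.mem_singleton] at h; subst h; omega
        have hxk2 : (x : ℕ) ≠ k := fun h => hxne (by rw [hxK x]; exact h)
        omega
      · rintro ⟨σ, b⟩ hp
        rw [Finset.mem_product] at hp
        have hbk : (b : ℕ) < k := (hmemB b).1 hp.2
        have hbK : b ≠ K := fun h => by rw [hxK] at h; omega
        have hKfix : σ K = K := hσK σ hp.1
        have hτb : (σ * Equiv.swap b K) b = K := by
          rw [Perm.mul_apply, swap_apply_left, hKfix]
        have hinv : (σ * Equiv.swap b K)⁻¹ K = b := by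
          rw [Perm.inv_eq_iff_eq]; exact hτb.symm
        have hcomp : (σ * Equiv.swap b K) * Equiv.swap ((σ * Equiv.swap b K)⁻¹ K) K = σ := by
          rw [hinv, mul_assoc, Equiv.swap_mul_self, mul_one]
        exact Prod.ext hcomp hinv
      · intro τ hτ
        show (τ * Equiv.swap (τ⁻¹ K) K) * Equiv.swap (τ⁻¹ K) K = τ
        rw [mul_assoc, Equiv.swap_mul_self, mul_one]
      · rintro ⟨σ, b⟩ hp
        rw [Finset.mem_product] at hp
        have hbk : (b : ℕ) < k := (hmemB b).1 hp.2
        have hbK : b ≠ K := fun h => by rw [hxK] at h; omega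
        have hsign : ((Equiv.Perm.sign (σ * Equiv.swap b K) : ℤ) : ℂ)
            = - ((Equiv.Perm.sign σ : ℤ) : ℂ) := by
          rw [Perm.sign_mul, sign_swap hbK]
          push_cast
          ring
        simp only
        rw [hpair σ hp.1 b hp.2, hsign, neg_smul]
    rw [hmov, sub_eq_add_neg]


/-- In `ℂ[S_n][v]`, the product `(v - J_1)(v - J_2)⋯(v - J_n)` of linear
factors involving the Jucys-Murphy elements equals `∑_{σ ∈ S_n} sign σ • σ v^{c(σ)}`,
where `c σ` is the number of orbits of `σ` on `{1, ..., n}`. -/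
theorem stmt_2 (n : ℕ)
    (J : Fin n → MonoidAlgebra ℂ (Equiv.Perm (Fin n)))
    (hJ : ∀ a, J a = ∑ b ∈ Finset.univ.filter (fun b => b < a),
      MonoidAlgebra.of ℂ (Equiv.Perm (Fin n)) (Equiv.swap b a))
    (c : Equiv.Perm (Fin n) → ℕ)
    (hc : ∀ σ, c σ = σ.cycleType.card + (n - σ.support.card)) :
    ((List.finRange n).map (fun a => Polynomial.X - Polynomial.C (J a))).prod
      = ∑ σ : Equiv.Perm (Fin n),
          ((Equiv.Perm.sign σ : ℤ) : ℂ) •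
            (Polynomial.C (MonoidAlgebra.of ℂ (Equiv.Perm (Fin n)) σ) * Polynomial.X ^ c σ) := by
  simp only [hJ]
  have h := key n n le_rfl
  rw [List.take_of_length_le (by simp)] at h
  rw [h]
  have hfilt : Finset.univ.filter (fun σ : Equiv.Perm (Fin n) => ∀ x ∈ σ.support, (x : ℕ) < n)
      = Finset.univ := Finset.filter_true_of_mem (fun σ _ => fun x _ => x.isLt)
  rw [hfilt]
  exact Finset.sum_congr rfl fun σ _ => by rw [hc σ]
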